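/- arXiv:1605.08344 — 2 statements merged into one kernel-verified Lean document; each statement's English description precedes it below -/
import Mathlib

section
/- Let R be a commutative ring, let h ∈ R[X] be a polynomial in one variable, and let d = h′ be its formal derivative. Then the R-algebra homomorphism R[T] → (R[X])[1/d] from the polynomial ring in one variable T to the localization of R[X] at d, sending T to h (and restricting to the identity on R), is an étale ring homomorphism, i.e., (R[X])[1/d] is formally étale and of finite presentation as an R[T]-algebra via this map. -/
open Polynomial

section Aux

variable {A T : Type*} [CommRing A] [CommRing T]

private lemma away_lift_aux (dd : A) (F₀ : A →+* T) (hu : IsUnit (F₀ dd)) :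
    ∃ F : Localization.Away dd →+* T,
      ∀ a, F (algebraMap A (Localization.Away dd) a) = F₀ a :=
  ⟨IsLocalization.Away.lift dd hu, fun a => IsLocalization.Away.lift_eq dd hu a⟩

private lemma away_ext_aux (dd : A) {F G : Localization.Away dd →+* T}
    (hfg : ∀ a, F (algebraMap A (Localization.Away dd) a)
      = G (algebraMap A (Localization.Away dd) a)) : F = G :=
  IsLocalization.ringHom_ext (Submonoid.powers dd) (RingHom.ext hfg)

private lemma away_isUnit_aux (dd : A) :
    IsUnit (algebraMap A (Localization.Away dd) dd) :=
  IsLocalization.Away.algebraMap_isUnit dd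

private lemma eval₂_add_sq_zero_aux {R : Type*} [CommRing R] (ρ : R →+* T)
    (p : R[X]) (x e : T) (he : e ^ 2 = 0) :
    eval₂ ρ (x + e) p = eval₂ ρ x p + eval₂ ρ x (derivative p) * e := by
  rw [eval₂_eq_eval_map, eval₂_eq_eval_map, eval₂_eq_eval_map, ← derivative_map,
    eval_add_of_sq_eq_zero _ _ _ he]

private lemma ringHom_eval₂_aux {R : Type*} [CommRing R] (G : R[X] →+* T) (p : R[X]) :
    G p = eval₂ (G.comp C) (G X) p := by
  conv_lhs => rw [← eval₂_C_X (p := p)]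
  rw [hom_eval₂]

end Aux

/-- For a commutative ring `R` and a polynomial `h ∈ R[X]` with formal derivative `d = h′`,
the `R`-algebra map `R[T] → R[X][1/d]`, `T ↦ h`, is étale. -/
theorem etale_localization_derivative (R : Type*) [CommRing R] (h : R[X]) :
    letI : Algebra R[X] (Localization.Away (derivative h)) :=
      (eval₂RingHom ((algebraMap R[X] (Localization.Away (derivative h))).comp (C : R →+* R[X]))
        (algebraMap R[X] (Localization.Away (derivative h)) h)).toAlgebra
    Algebra.Etale R[X] (Localization.Away (derivative h)) := by
  let B := Localization.Away (derivative h)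
  let ψ : R[X] →+* B := algebraMap R[X] B
  have hdunit : IsUnit (ψ (derivative h)) := away_isUnit_aux (derivative h)
  have hψC : ∀ r : R, ψ (C r) = algebraMap R B r := fun r => by
    rw [← Polynomial.algebraMap_eq, ← IsScalarTower.algebraMap_apply]
  haveI fpXB : Algebra.FinitePresentation R[X] B :=
    IsLocalization.Away.finitePresentation (derivative h)
  haveI fpRB : Algebra.FinitePresentation R B :=
    Algebra.FinitePresentation.trans R R[X] B
  letI alg : Algebra R[X] B := (eval₂RingHom (ψ.comp C) (ψ h)).toAlgebra
  have halg : ∀ p : R[X], algebraMap R[X] B p = ψ (eval₂ C h p) := by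
    intro p
    show eval₂RingHom (ψ.comp C) (ψ h) p = ψ (eval₂ C h p)
    rw [coe_eval₂RingHom, hom_eval₂]
  have hφC : ∀ r : R, algebraMap R[X] B (C r) = ψ (C r) := fun r => by
    rw [halg, eval₂_C]
  have hφX : algebraMap R[X] B X = ψ h := by rw [halg, eval₂_X]
  haveI hunr : Algebra.FormallyUnramified R[X] B := by
    rw [Algebra.FormallyUnramified.iff_comp_injective]
    intro T _ _ I hI f g hfg
    set ρ : R →+* T := (algebraMap R[X] T).comp C with hρ
    have hcomp : ∀ (f : B →ₐ[R[X]] T), (f.toRingHom.comp ψ).comp C = ρ := by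
      intro f
      refine RingHom.ext fun r => ?_
      show f (ψ (C r)) = algebraMap R[X] T (C r)
      rw [← hφC r]
      exact f.commutes (C r)
    have keyf : ∀ p : R[X], f (ψ p) = eval₂ ρ (f (ψ X)) p := by
      intro p
      have h1 := ringHom_eval₂_aux (f.toRingHom.comp ψ) p
      rw [hcomp f] at h1
      exact h1
    have keyg : ∀ p : R[X], g (ψ p) = eval₂ ρ (g (ψ X)) p := by
      intro p
      have h1 := ringHom_eval₂_aux (g.toRingHom.comp ψ) p
      rw [hcomp g] at h1
      exact h1
    set x := f (ψ X)
    set y := g (ψ X)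
    have hmk : Ideal.Quotient.mk I x = Ideal.Quotient.mk I y := by
      exact congrArg (fun F : B →ₐ[R[X]] T ⧸ I => F (ψ X)) hfg
    have hxyI : y - x ∈ I := I.neg_mem_iff.mp (by simpa using Ideal.Quotient.eq.mp hmk)
    have hsq : (y - x) ^ 2 = 0 := by
      have h2 : (y - x) ^ 2 ∈ I ^ 2 := Ideal.pow_mem_pow hxyI 2
      rw [hI] at h2
      exact Ideal.mem_bot.mp h2
    have htay := eval₂_add_sq_zero_aux ρ h x (y - x) hsq
    rw [show x + (y - x) = y by ring] at htay
    have heq : eval₂ ρ y h = eval₂ ρ x h := by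
      rw [← keyf h, ← keyg h, ← hφX]
      rw [f.commutes X, g.commutes X]
    have hzero : eval₂ ρ x (derivative h) * (y - x) = 0 := by
      rw [heq, left_eq_add] at htay
      exact htay
    have hu : IsUnit (eval₂ ρ x (derivative h)) := by
      have h3 := hdunit.map f
      rwa [keyf (derivative h)] at h3
    have hxy : x = y := by
      have h4 : y - x = 0 := (hu.mul_right_eq_zero).mp hzero
      rw [sub_eq_zero] at h4
      exact h4.symm
    have hring : f.toRingHom = g.toRingHom := by
      refine away_ext_aux (derivative h) fun p => ?_
      show f (ψ p) = g (ψ p)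
      rw [keyf p, keyg p, hxy]
    exact AlgHom.ext fun b => DFunLike.congr_fun hring b
  haveI hsm : Algebra.FormallySmooth R[X] B := by
    refine Algebra.FormallySmooth.of_comp_surjective ?_
    intro T _ _ I hI fbar
    set σ : R[X] →+* T := algebraMap R[X] T with hσ
    set ρ : R →+* T := σ.comp C with hρ
    set π : T →+* T ⧸ I := Ideal.Quotient.mk I with hπ
    have hπσ : ∀ p : R[X], π (σ p) = algebraMap R[X] (T ⧸ I) p := fun p => rfl
    have hπρ : π.comp ρ = (algebraMap R[X] (T ⧸ I)).comp C :=
      RingHom.ext fun r => hπσ (C r)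
    have hkey : ∀ p : R[X],
        fbar (ψ p) = eval₂ ((algebraMap R[X] (T ⧸ I)).comp C) (fbar (ψ X)) p := by
      intro p
      have hc : (fbar.toRingHom.comp ψ).comp C = (algebraMap R[X] (T ⧸ I)).comp C := by
        refine RingHom.ext fun r => ?_
        show fbar (ψ (C r)) = algebraMap R[X] (T ⧸ I) (C r)
        rw [← hφC r]
        exact fbar.commutes (C r)
      have h1 := ringHom_eval₂_aux (fbar.toRingHom.comp ψ) p
      rw [hc] at h1
      exact h1
    obtain ⟨x₀, hx₀⟩ := Ideal.Quotient.mk_surjective (fbar (ψ X))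
    rw [show Ideal.Quotient.mk I = π from rfl] at hx₀
    have hπeval : ∀ p : R[X], π (eval₂ ρ x₀ p) = fbar (ψ p) := by
      intro p
      rw [hom_eval₂, hπρ, hx₀, hkey p]
    have hε : eval₂ ρ x₀ h - σ X ∈ I := by
      have h5 : π (eval₂ ρ x₀ h) = π (σ X) := by
        rw [hπeval h, hπσ X, ← hφX]
        exact fbar.commutes X
      exact Ideal.Quotient.eq.mp h5
    have hnil : IsNilpotent I := ⟨2, hI.trans (Ideal.zero_eq_bot).symm⟩
    have hu0 : IsUnit (eval₂ ρ x₀ (derivative h)) := by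
      apply (IsNilpotent.isUnit_quotient_mk_iff hnil).mp
      show IsUnit (π (eval₂ ρ x₀ (derivative h)))
      rw [hπeval (derivative h)]
      exact hdunit.map fbar
    obtain ⟨u, hup⟩ := hu0
    set ε : T := eval₂ ρ x₀ h - σ X with hεdef
    set e : T := -(↑u⁻¹ * ε) with hedef
    have heI : e ∈ I := I.neg_mem (I.mul_mem_left _ hε)
    have hesq : e ^ 2 = 0 := by
      have h2 : e ^ 2 ∈ I ^ 2 := Ideal.pow_mem_pow heI 2
      rw [hI] at h2
      exact Ideal.mem_bot.mp h2
    set x : T := x₀ + e with hxdef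
    have hxh : eval₂ ρ x h = σ X := by
      rw [hxdef, eval₂_add_sq_zero_aux ρ h x₀ e hesq, ← hup, hedef]
      have h6 : eval₂ ρ x₀ h = σ X + ε := by rw [hεdef]; ring
      rw [h6]
      have h7 : (u : T) * -((↑u⁻¹ : T) * ε) = -ε := by
        rw [mul_neg, ← mul_assoc, Units.mul_inv, one_mul]
      rw [h7]
      ring
    have hπx : π x = fbar (ψ X) := by
      rw [hxdef, map_add, hx₀, Ideal.Quotient.eq_zero_iff_mem.mpr heI, add_zero]
    have hπevalx : ∀ p : R[X], π (eval₂ ρ x p) = fbar (ψ p) := by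
      intro p
      rw [hom_eval₂, hπρ, hπx, hkey p]
    have hxd : IsUnit (eval₂ ρ x (derivative h)) := by
      apply (IsNilpotent.isUnit_quotient_mk_iff hnil).mp
      show IsUnit (π (eval₂ ρ x (derivative h)))
      rw [hπevalx (derivative h)]
      exact hdunit.map fbar
    obtain ⟨F, hF⟩ := away_lift_aux (derivative h) (eval₂RingHom ρ x) hxd
    have hFcρ : (eval₂RingHom ρ x).comp C = ρ := RingHom.ext fun r => eval₂_C ρ x
    refine ⟨⟨F, ?_⟩, ?_⟩
    · intro p
      show F (algebraMap R[X] B p) = σ p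
      rw [halg p, hF (eval₂ C h p)]
      have h8 := hom_eval₂ (f := C) (g := eval₂RingHom ρ x) (p := p) (x := h)
      rw [hFcρ] at h8
      have h9 : (eval₂RingHom ρ x) h = σ X := hxh
      rw [h9] at h8
      show (eval₂RingHom ρ x) (eval₂ C h p) = σ p
      rw [h8, ringHom_eval₂_aux σ p, ← hρ]
    · have hring : π.comp F = fbar.toRingHom := by
        refine away_ext_aux (derivative h) fun p => ?_
        show π (F (ψ p)) = fbar (ψ p)
        rw [hF p]
        exact hπevalx p
      exact AlgHom.ext fun b => DFunLike.congr_fun hring b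
  haveI hfe : Algebra.FormallyEtale R[X] B :=
    Algebra.FormallyEtale.of_formallyUnramified_and_formallySmooth
  haveI tower := IsScalarTower.of_algebraMap_eq' (R := R) (S := R[X]) (A := B) (by
    refine RingHom.ext fun r => ?_
    rw [RingHom.comp_apply, Polynomial.algebraMap_eq, hφC r, hψC r])
  haveI ftp : Algebra.FiniteType R R[X] := inferInstance
  haveI fp : Algebra.FinitePresentation R[X] B :=
    Algebra.FinitePresentation.of_restrict_scalars_finitePresentation R R[X] B
  exact ⟨hfe, fp⟩
end

section
/- Let R be a commutative ring and h ∈ R[X] a polynomial in one variable whose formal derivative h′ becomes invertible in the localization (R[X])[1/h′]. Then the quotient R-algebra (R[X])[1/h′]/(h) is étale over R, i.e., it is a formally étale R-algebra of finite presentation. -/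
open Polynomial

section StandardEtaleAux

variable {R : Type*} [CommRing R] (h : R[X]) {B : Type*} [CommRing B] [Algebra R B]

private lemma aeval_of_algHom (G : Localization.Away (derivative h) →ₐ[R] B) (p : R[X]) :
    G (algebraMap R[X] (Localization.Away (derivative h)) p)
      = aeval (G (algebraMap R[X] (Localization.Away (derivative h)) X)) p := by
  rw [aeval_algHom_apply]
  congr 1
  have := aeval_algHom_apply (IsScalarTower.toAlgHom R R[X] (Localization.Away (derivative h))) X p
  simpa [aeval_X_left_apply] using this.symm

private lemma algHom_ext_at_X {G₁ G₂ : Localization.Away (derivative h) →ₐ[R] B}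
    (hX : G₁ (algebraMap R[X] (Localization.Away (derivative h)) X)
        = G₂ (algebraMap R[X] (Localization.Away (derivative h)) X)) : G₁ = G₂ := by
  apply AlgHom.coe_ringHom_injective
  apply IsLocalization.ringHom_ext (Submonoid.powers (derivative h))
  refine RingHom.ext fun p => ?_
  show G₁ (algebraMap R[X] (Localization.Away (derivative h)) p)
      = G₂ (algebraMap R[X] (Localization.Away (derivative h)) p)
  rw [aeval_of_algHom h G₁ p, aeval_of_algHom h G₂ p, hX]

private lemma aeval_add_sq_zero (p : R[X]) (a ε : B) (hε : ε ^ 2 = 0) :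
    aeval (a + ε) p = aeval a p + aeval a (derivative p) * ε := by
  rw [← eval_map_algebraMap, ← eval_map_algebraMap, ← eval_map_algebraMap,
    eval_add_of_sq_eq_zero _ a ε hε, derivative_map]

private lemma unramified_aux
    (hunit : IsUnit (algebraMap R[X] (Localization.Away (derivative h)) (derivative h))) :
    Algebra.FormallyUnramified R
      (Localization.Away (derivative h) ⧸
        Ideal.span {algebraMap R[X] (Localization.Away (derivative h)) h}) := by
  rw [Algebra.FormallyUnramified.iff_comp_injective]
  intro B _ _ I hI f₁ f₂ e
  refine Ideal.Quotient.algHom_ext R (algHom_ext_at_X h ?_)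
  -- notation
  have hA0 : Ideal.Quotient.mkₐ R
      (Ideal.span {algebraMap R[X] (Localization.Away (derivative h)) h})
      (algebraMap R[X] (Localization.Away (derivative h)) h) = 0 :=
    Ideal.Quotient.eq_zero_iff_mem.mpr (Ideal.subset_span rfl)
  set G₁ := f₁.comp (Ideal.Quotient.mkₐ R
      (Ideal.span {algebraMap R[X] (Localization.Away (derivative h)) h})) with hG₁
  set G₂ := f₂.comp (Ideal.Quotient.mkₐ R
      (Ideal.span {algebraMap R[X] (Localization.Away (derivative h)) h})) with hG₂
  show G₁ (algebraMap R[X] (Localization.Away (derivative h)) X)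
      = G₂ (algebraMap R[X] (Localization.Away (derivative h)) X)
  have hv1 : aeval (G₁ (algebraMap R[X] (Localization.Away (derivative h)) X)) h = 0 := by
    rw [← aeval_of_algHom h G₁ h, hG₁, AlgHom.comp_apply, hA0, map_zero]
  have hv2 : aeval (G₂ (algebraMap R[X] (Localization.Away (derivative h)) X)) h = 0 := by
    rw [← aeval_of_algHom h G₂ h, hG₂, AlgHom.comp_apply, hA0, map_zero]
  have hsub : G₁ (algebraMap R[X] (Localization.Away (derivative h)) X)
      - G₂ (algebraMap R[X] (Localization.Away (derivative h)) X) ∈ I := by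
    refine Ideal.Quotient.eq.mp ?_
    have := AlgHom.congr_fun e
      (Ideal.Quotient.mkₐ R (Ideal.span {algebraMap R[X] (Localization.Away (derivative h)) h})
        (algebraMap R[X] (Localization.Away (derivative h)) X))
    simpa [hG₁, hG₂] using this
  have hε2 : (G₁ (algebraMap R[X] (Localization.Away (derivative h)) X)
      - G₂ (algebraMap R[X] (Localization.Away (derivative h)) X)) ^ 2 = 0 := by
    have : (G₁ (algebraMap R[X] (Localization.Away (derivative h)) X)
        - G₂ (algebraMap R[X] (Localization.Away (derivative h)) X)) ^ 2 ∈ I * I := by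
      rw [pow_two]
      exact Ideal.mul_mem_mul hsub hsub
    have h5 : I * I = ⊥ := by rw [← pow_two, hI]
    rw [h5] at this
    simpa using this
  have key : aeval (G₂ (algebraMap R[X] (Localization.Away (derivative h)) X)) (derivative h)
      * (G₁ (algebraMap R[X] (Localization.Away (derivative h)) X)
        - G₂ (algebraMap R[X] (Localization.Away (derivative h)) X)) = 0 := by
    have h3 := aeval_add_sq_zero h
      (G₂ (algebraMap R[X] (Localization.Away (derivative h)) X))
      (G₁ (algebraMap R[X] (Localization.Away (derivative h)) X)
        - G₂ (algebraMap R[X] (Localization.Away (derivative h)) X)) hε2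
    have h4 : G₂ (algebraMap R[X] (Localization.Away (derivative h)) X)
        + (G₁ (algebraMap R[X] (Localization.Away (derivative h)) X)
          - G₂ (algebraMap R[X] (Localization.Away (derivative h)) X))
        = G₁ (algebraMap R[X] (Localization.Away (derivative h)) X) := by ring
    rw [h4, hv1, hv2, zero_add] at h3
    exact h3.symm
  have hud : IsUnit (aeval (G₂ (algebraMap R[X] (Localization.Away (derivative h)) X))
      (derivative h)) := by
    rw [← aeval_of_algHom h G₂ (derivative h)]
    exact hunit.map G₂
  have hz : G₁ (algebraMap R[X] (Localization.Away (derivative h)) X)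
      - G₂ (algebraMap R[X] (Localization.Away (derivative h)) X) = 0 := by
    rcases hud with ⟨u, hu⟩
    have := congrArg (fun z => (↑u⁻¹ : B) * z) key
    simpa [← hu, ← mul_assoc] using this
  exact sub_eq_zero.mp hz

/-- Newton's method: given a square-zero thickening `π : P → Q`, where the image of `h`
squares to zero and the image of `h′` is a unit, produce an `R`-algebra map `φ : P → Q`
killing `h` and agreeing with `π` up to a multiple of `π(h)`. -/
private lemma newton_aux (π : Localization.Away (derivative h) →ₐ[R] B)
    (hh2 : π (algebraMap R[X] (Localization.Away (derivative h)) h) ^ 2 = 0)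
    (hd : IsUnit (π (algebraMap R[X] (Localization.Away (derivative h)) (derivative h)))) :
    ∃ φ : Localization.Away (derivative h) →ₐ[R] B,
      φ (algebraMap R[X] (Localization.Away (derivative h)) h) = 0 ∧
      ∃ c : B, φ (algebraMap R[X] (Localization.Away (derivative h)) X)
        = π (algebraMap R[X] (Localization.Away (derivative h)) X)
          - π (algebraMap R[X] (Localization.Away (derivative h)) h) * c := by
  set xq := π (algebraMap R[X] (Localization.Away (derivative h)) X) with hxq
  set hq := π (algebraMap R[X] (Localization.Away (derivative h)) h) with hhq
  set dq := π (algebraMap R[X] (Localization.Away (derivative h)) (derivative h)) with hdq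
  set v : B := ↑hd.unit⁻¹ with hvdef
  have hv : dq * v = 1 := hd.mul_val_inv
  set t : B := xq - hq * v with ht
  have hε2 : (-(hq * v)) ^ 2 = 0 := by
    have : (-(hq * v)) ^ 2 = hq ^ 2 * v ^ 2 := by ring
    rw [this, hh2, zero_mul]
  have haeval : ∀ p : R[X],
      aeval t p = aeval xq p + aeval xq (derivative p) * (-(hq * v)) := by
    intro p
    rw [ht, sub_eq_add_neg]
    exact aeval_add_sq_zero p _ _ hε2
  have hπ : ∀ p : R[X],
      aeval xq p = π (algebraMap R[X] (Localization.Away (derivative h)) p) :=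
    fun p => (aeval_of_algHom h π p).symm
  have hth : aeval t h = 0 := by
    rw [haeval h, hπ h, hπ (derivative h), ← hhq, ← hdq]
    have : dq * (hq * v) = hq := by
      rw [← mul_assoc, mul_comm dq hq, mul_assoc, hv, mul_one]
    rw [mul_neg, this, add_neg_cancel]
  have htd : IsUnit (aeval t (derivative h)) := by
    rw [haeval (derivative h), hπ (derivative h), ← hdq]
    refine IsNilpotent.isUnit_add_left_of_commute ?_ hd ?_
    · refine ⟨2, ?_⟩
      rw [mul_pow, hε2, mul_zero]
    · exact Commute.all _ _
  have hunits : ∀ y : Submonoid.powers (derivative h),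
      IsUnit ((aeval t : R[X] →ₐ[R] B) y) := by
    rintro ⟨y, n, rfl⟩
    simpa [map_pow] using htd.pow n
  refine ⟨IsLocalization.liftAlgHom (M := Submonoid.powers (derivative h))
      (S := Localization.Away (derivative h)) hunits, ?_, v, ?_⟩
  · show IsLocalization.lift _ (algebraMap R[X] (Localization.Away (derivative h)) h) = 0
    rw [IsLocalization.lift_eq]
    exact hth
  · show IsLocalization.lift _ (algebraMap R[X] (Localization.Away (derivative h)) X)
      = xq - hq * v
    rw [IsLocalization.lift_eq]
    show aeval t X = _
    rw [aeval_X, ht]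


set_option maxHeartbeats 2000000 in
private lemma smooth_aux
    (hunit : IsUnit (algebraMap R[X] (Localization.Away (derivative h)) (derivative h))) :
    Algebra.FormallySmooth R
      (Localization.Away (derivative h) ⧸
        Ideal.span {algebraMap R[X] (Localization.Away (derivative h)) h}) := by
  haveI : Algebra.FormallySmooth R[X] (Localization.Away (derivative h)) :=
    Algebra.FormallySmooth.of_isLocalization (Submonoid.powers (derivative h))
  haveI : Algebra.FormallySmooth R (Localization.Away (derivative h)) :=
    Algebra.FormallySmooth.comp R R[X] (Localization.Away (derivative h))
  set f := Ideal.Quotient.mkₐ R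
    (Ideal.span {algebraMap R[X] (Localization.Away (derivative h)) h}) with hf
  have hJ : RingHom.ker f.toRingHom
      = Ideal.span {algebraMap R[X] (Localization.Away (derivative h)) h} := Ideal.mk_ker
  set π := Ideal.Quotient.mkₐ R (RingHom.ker f.toRingHom ^ 2) with hπdef
  have hh2 : π (algebraMap R[X] (Localization.Away (derivative h)) h) ^ 2 = 0 := by
    rw [← map_pow, hπdef, Ideal.Quotient.mkₐ_eq_mk, Ideal.Quotient.eq_zero_iff_mem]
    refine Ideal.pow_mem_pow ?_ 2
    rw [hJ]
    exact Ideal.subset_span rfl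
  obtain ⟨φ, hφh, c, hφX⟩ := newton_aux h π hh2 (hunit.map π)
  have hker : ∀ x ∈ Ideal.span {algebraMap R[X] (Localization.Away (derivative h)) h},
      φ x = 0 := by
    intro x hx
    obtain ⟨c', rfl⟩ := Ideal.mem_span_singleton'.mp hx
    rw [map_mul, hφh, mul_zero]
  refine Algebra.FormallySmooth.of_split f (Ideal.Quotient.liftₐ _ φ hker) ?_
  refine Ideal.Quotient.algHom_ext R (algHom_ext_at_X h ?_)
  rw [AlgHom.comp_apply, AlgHom.comp_apply, AlgHom.comp_apply]
  rw [Ideal.Quotient.mkₐ_eq_mk, Ideal.Quotient.liftₐ_apply]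
  erw [Ideal.Quotient.lift_mk]
  rw [AlgHom.id_apply]
  simp only [AlgHom.coe_toRingHom]
  rw [hφX, map_sub, map_mul]
  have hfk : ∀ p : Localization.Away (derivative h), f.kerSquareLift (π p) = f p :=
    fun p => rfl
  rw [hfk, hfk]
  have hf0 : f (algebraMap R[X] (Localization.Away (derivative h)) h) = 0 := by
    rw [hf, Ideal.Quotient.mkₐ_eq_mk, Ideal.Quotient.eq_zero_iff_mem]
    exact Ideal.subset_span rfl
  rw [hf0, zero_mul, sub_zero]
  rfl


end StandardEtaleAux

/-- For a commutative ring `R` and a polynomial `h ∈ R[X]` whose formal derivative `h′`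
becomes invertible in the localization `R[X][1/h′]`, the quotient `R`-algebra
`R[X][1/h′]/(h)` is étale over `R` (standard étale algebras are étale). -/

theorem standard_etale_is_etale (R : Type*) [CommRing R] (h : R[X])
    (hunit : IsUnit (algebraMap R[X] (Localization.Away (derivative h)) (derivative h))) :
    Algebra.Etale R
      (Localization.Away (derivative h) ⧸
        Ideal.span {algebraMap R[X] (Localization.Away (derivative h)) h}) := by
  haveI hfp : Algebra.FinitePresentation R
      (Localization.Away (derivative h) ⧸
        Ideal.span {algebraMap R[X] (Localization.Away (derivative h)) h}) := by
    haveI : Algebra.FinitePresentation R[X] (Localization.Away (derivative h)) :=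
      IsLocalization.Away.finitePresentation (derivative h)
    haveI : Algebra.FinitePresentation R (Localization.Away (derivative h)) :=
      Algebra.FinitePresentation.trans R R[X] (Localization.Away (derivative h))
    exact Algebra.FinitePresentation.quotient (Submodule.fg_span_singleton _)
  haveI := unramified_aux h hunit
  haveI := smooth_aux h hunit
  haveI : Algebra.FormallyEtale R
      (Localization.Away (derivative h) ⧸
        Ideal.span {algebraMap R[X] (Localization.Away (derivative h)) h}) :=
    Algebra.FormallyEtale.of_formallyUnramified_and_formallySmooth
  exact { formallyEtale := this, finitePresentation := hfp }
end
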